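/- Assume the reverse Loewner flow setup with 0 < σ < 8/π. Then |X(s)| ≤ (πσ/√(64 − π²σ²))·Y(s) for all s ∈ [0,t]. -/

import Mathlib

open Set MeasureTheory intervalIntegral Real Topology Filter

private lemma ftc_cont {f : ℝ → ℝ} (hf : Continuous f) (s : ℝ) :
    HasDerivAt (fun u => ∫ r in (0:ℝ)..u, f r) (f s) s :=
  intervalIntegral.integral_hasDerivAt_right (hf.intervalIntegrable 0 s)
    (hf.stronglyMeasurableAtFilter _ _) hf.continuousAt

private lemma le_arcsin_self {x : ℝ} (h0 : 0 ≤ x) (h1 : x ≤ 1) : x ≤ Real.arcsin x := by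
  have h := Real.sin_le (Real.arcsin_nonneg.2 h0)
  rwa [Real.sin_arcsin (by linarith) h1] at h

private lemma key_strict {a A : ℝ} (ha : 0 < a) (hA : a < A) :
    a * Real.sqrt (A^2 - a^2) < A^2 * Real.arcsin (a/A) := by
  have hA0 : 0 < A := lt_trans ha hA
  have h1 : Real.sqrt (A^2 - a^2) < A := by
    have h2 : A^2 - a^2 < A^2 := by nlinarith
    calc Real.sqrt (A^2-a^2) < Real.sqrt (A^2) := Real.sqrt_lt_sqrt (by nlinarith) h2
    _ = A := Real.sqrt_sq hA0.le
  have h2 : a/A ≤ Real.arcsin (a/A) :=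
    le_arcsin_self (by positivity) (by rw [div_le_one hA0]; exact hA.le)
  calc a * Real.sqrt (A^2-a^2) < a * A := by nlinarith
  _ = A^2 * (a/A) := by field_simp
  _ ≤ A^2 * Real.arcsin (a/A) := by nlinarith [h2]

private lemma hasDerivAt_H {A w : ℝ} (hA : 0 < A) (hw1 : -A < w) (hw2 : w < A) :
    HasDerivAt (fun v => (v * Real.sqrt (A^2 - v^2) + A^2 * Real.arcsin (v/A)) / 2)
      (Real.sqrt (A^2 - w^2)) w := by
  have hu : 0 < A^2 - w^2 := by nlinarith
  have hsu : 0 < Real.sqrt (A^2 - w^2) := Real.sqrt_pos.2 hu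
  have hsq : Real.sqrt (A^2 - w^2) ^ 2 = A^2 - w^2 := Real.sq_sqrt hu.le
  have h1 : HasDerivAt (fun v : ℝ => A^2 - v^2) (-(2*w)) w := by
    simpa using (hasDerivAt_pow 2 w).const_sub (A^2)
  have h2 : HasDerivAt (fun v : ℝ => Real.sqrt (A^2 - v^2))
      (1/(2*Real.sqrt (A^2-w^2)) * (-(2*w))) w :=
    (Real.hasDerivAt_sqrt hu.ne').comp w h1
  have h3 : HasDerivAt (fun v : ℝ => v * Real.sqrt (A^2 - v^2))
      (1 * Real.sqrt (A^2-w^2) + w * (1/(2*Real.sqrt (A^2-w^2)) * (-(2*w)))) w :=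
    (hasDerivAt_id w).mul h2
  have hne1 : w/A ≠ -1 := by
    intro h
    rw [div_eq_iff hA.ne'] at h
    nlinarith
  have hne2 : w/A ≠ 1 := by
    intro h
    rw [div_eq_iff hA.ne'] at h
    nlinarith
  have h4 : HasDerivAt (fun v : ℝ => v/A) (1/A) w := by
    simpa using (hasDerivAt_id w).div_const A
  have h5 : HasDerivAt (fun v : ℝ => Real.arcsin (v/A))
      (1 / Real.sqrt (1 - (w/A)^2) * (1/A)) w :=
    (Real.hasDerivAt_arcsin hne1 hne2).comp (h := fun v : ℝ => v/A) w h4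
  have h6 : HasDerivAt (fun v : ℝ => A^2 * Real.arcsin (v/A))
      (A^2 * (1/Real.sqrt (1-(w/A)^2) * (1/A))) w := h5.const_mul (A^2)
  have h7 : HasDerivAt (fun v => (v * Real.sqrt (A^2 - v^2) + A^2 * Real.arcsin (v/A)) / 2)
      ((1 * Real.sqrt (A^2-w^2) + w * (1/(2*Real.sqrt (A^2-w^2)) * (-(2*w))) +
        A^2 * (1/Real.sqrt (1-(w/A)^2) * (1/A))) / 2) w := (h3.add h6).div_const 2
  have e1 : Real.sqrt (1 - (w/A)^2) = Real.sqrt (A^2 - w^2) / A := by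
    rw [show (1 : ℝ) - (w/A)^2 = (A^2 - w^2)/A^2 by field_simp,
      Real.sqrt_div hu.le, Real.sqrt_sq hA.le]
  convert h7 using 1
  rw [e1]
  field_simp
  linear_combination hsq

set_option maxHeartbeats 1000000 in
private lemma auxA
    (σ t : ℝ) (hσ0 : 0 < σ) (ht : 0 < t)
    (β : ℝ → ℝ) (hβcont : ContinuousOn β (Icc 0 t)) (hβ0 : β 0 = 0)
    (hβlip : ∀ r ∈ Icc (0 : ℝ) t, ∀ s ∈ Icc (0 : ℝ) t, |β s - β r| ≤ σ * Real.sqrt |s - r|)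
    (y : ℝ) (hy : 0 < y)
    (X Y : ℝ → ℝ)
    (hXcont : ContinuousOn X (Icc 0 t)) (hYcont : ContinuousOn Y (Icc 0 t))
    (hYpos : ∀ s ∈ Icc (0 : ℝ) t, 0 < Y s)
    (hX : ∀ s ∈ Icc (0 : ℝ) t,
      X s = β s - ∫ r in (0 : ℝ)..s, 2 * X r / (X r ^ 2 + Y r ^ 2))
    (hY : ∀ s ∈ Icc (0 : ℝ) t,
      Y s = y + ∫ r in (0 : ℝ)..s, 2 * Y r / (X r ^ 2 + Y r ^ 2))
    (hσ : σ < 8 / Real.pi)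
    (s₁ : ℝ) (hs₁ : s₁ ∈ Icc (0:ℝ) t)
    (hcone : ∀ r ∈ Icc (0:ℝ) s₁,
      |X r| ≤ Real.pi * σ / Real.sqrt (64 - Real.pi ^ 2 * σ ^ 2) * Y r)
    (heq : X s₁ = Real.pi * σ / Real.sqrt (64 - Real.pi ^ 2 * σ ^ 2) * Y s₁) :
    False := by
  set c := Real.pi * σ / Real.sqrt (64 - Real.pi ^ 2 * σ ^ 2) with hcdef
  have hπ := Real.pi_pos
  have hE : (0:ℝ) < 64 - Real.pi^2*σ^2 := by
    have h8 : σ * Real.pi < 8 := by rwa [lt_div_iff₀ hπ] at hσ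
    nlinarith [mul_pos hσ0 hπ]
  have hsqE : 0 < Real.sqrt (64 - Real.pi^2*σ^2) := Real.sqrt_pos.2 hE
  have hc : 0 < c := div_pos (mul_pos hπ hσ0) hsqE
  set b := (64 - Real.pi^2*σ^2)/16 with hbdef
  have hb : 0 < b := by positivity
  have hsqb : 0 < Real.sqrt b := Real.sqrt_pos.2 hb
  have hc2 : c^2 = (Real.pi*σ)^2/(64 - Real.pi^2*σ^2) := by
    rw [hcdef, div_pow, Real.sq_sqrt hE.le]
  have key3 : b*(1 + c^2) = 4 := by
    rw [hc2, hbdef]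
    field_simp
    ring
  have key1 : c * Real.sqrt b = Real.pi*σ/4 := by
    rw [hcdef, hbdef,
      show (64 - Real.pi^2*σ^2)/16 = (64 - Real.pi^2*σ^2) * (1/4)^2 by ring,
      Real.sqrt_mul hE.le, Real.sqrt_sq (by norm_num : (0:ℝ) ≤ 1/4)]
    field_simp
  have h0t : (0:ℝ) ∈ Icc (0:ℝ) t := ⟨le_refl 0, ht.le⟩
  -- clamped versions of the data, globally continuous
  set τ : ℝ → ℝ := fun s => max 0 (min s t) with hτdef
  have hτcont : Continuous τ := continuous_const.max (continuous_id.min continuous_const)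
  have hτmem : ∀ s, τ s ∈ Icc (0:ℝ) t := fun s => ⟨le_max_left _ _, max_le ht.le (min_le_right s t)⟩
  have hτid : ∀ s ∈ Icc (0:ℝ) t, τ s = s := by
    intro s hs
    rw [hτdef]
    simp only
    rw [min_eq_left hs.2, max_eq_right hs.1]
  set XC : ℝ → ℝ := fun s => X (τ s) with hXCdef
  set YC : ℝ → ℝ := fun s => Y (τ s) with hYCdef
  set βC : ℝ → ℝ := fun s => β (τ s) with hβCdef
  have hXCc : Continuous XC := hXcont.comp_continuous hτcont hτmem
  have hYCc : Continuous YC := hYcont.comp_continuous hτcont hτmem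
  have hβCc : Continuous βC := hβcont.comp_continuous hτcont hτmem
  have hXCeq : ∀ s ∈ Icc (0:ℝ) t, XC s = X s := by
    intro s hs; rw [hXCdef]; simp only [hτid s hs]
  have hYCeq : ∀ s ∈ Icc (0:ℝ) t, YC s = Y s := by
    intro s hs; rw [hYCdef]; simp only [hτid s hs]
  have hβCeq : ∀ s ∈ Icc (0:ℝ) t, βC s = β s := by
    intro s hs; rw [hβCdef]; simp only [hτid s hs]
  have hYCpos : ∀ s, 0 < YC s := fun s => hYpos _ (hτmem s)
  have hDpos : ∀ s, 0 < XC s^2 + YC s^2 :=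
    fun s => add_pos_of_nonneg_of_pos (sq_nonneg _) (pow_pos (hYCpos s) 2)
  set gC : ℝ → ℝ := fun r => 2 * YC r / (XC r^2 + YC r^2) with hgCdef
  set qC : ℝ → ℝ := fun r => 2 * XC r / (XC r^2 + YC r^2) with hqCdef
  have hgCcont : Continuous gC :=
    (continuous_const.mul hYCc).div ((hXCc.pow 2).add (hYCc.pow 2)) fun s => (hDpos s).ne'
  have hqCcont : Continuous qC :=
    (continuous_const.mul hXCc).div ((hXCc.pow 2).add (hYCc.pow 2)) fun s => (hDpos s).ne'
  have hgC0 : ∀ r, 0 ≤ gC r := fun r =>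
    div_nonneg (mul_nonneg (by norm_num) (hYCpos r).le) (hDpos r).le
  have hgCeq : ∀ r ∈ Icc (0:ℝ) t, gC r = 2 * Y r / (X r ^ 2 + Y r ^ 2) := by
    intro r hr
    rw [hgCdef]
    simp only [hXCeq r hr, hYCeq r hr]
  have hqCeq : ∀ r ∈ Icc (0:ℝ) t, qC r = 2 * X r / (X r ^ 2 + Y r ^ 2) := by
    intro r hr
    rw [hqCdef]
    simp only [hXCeq r hr, hYCeq r hr]
  set Ybar : ℝ → ℝ := fun s => y + ∫ r in (0:ℝ)..s, gC r with hYbardef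
  have hYbarD : ∀ s, HasDerivAt Ybar (gC s) s := fun s => (ftc_cont hgCcont s).const_add y
  have hYbarC : Continuous Ybar := continuous_iff_continuousAt.2 fun s => (hYbarD s).continuousAt
  have hYbar0 : Ybar 0 = y := by
    rw [hYbardef]; simp [intervalIntegral.integral_same]
  have hYbarEq : ∀ s ∈ Icc (0:ℝ) t, Ybar s = Y s := by
    intro s hs
    rw [hY s hs, hYbardef]
    simp only
    congr 1
    apply intervalIntegral.integral_congr
    intro r hr
    rw [Set.uIcc_of_le hs.1] at hr
    exact hgCeq r ⟨hr.1, hr.2.trans hs.2⟩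
  set IqC : ℝ → ℝ := fun s => ∫ r in (0:ℝ)..s, qC r with hIqCdef
  have hIqCD : ∀ s, HasDerivAt IqC (qC s) s := fun s => ftc_cont hqCcont s
  have hIqCc : Continuous IqC := continuous_iff_continuousAt.2 fun s => (hIqCD s).continuousAt
  have hXeq : ∀ s ∈ Icc (0:ℝ) t, X s = βC s - IqC s := by
    intro s hs
    have h1 : βC s = β s := hβCeq s hs
    have h2 : IqC s = ∫ r in (0:ℝ)..s, 2 * X r / (X r ^ 2 + Y r ^ 2) := by
      rw [hIqCdef]
      apply intervalIntegral.integral_congr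
      intro r hr
      rw [Set.uIcc_of_le hs.1] at hr
      exact hqCeq r ⟨hr.1, hr.2.trans hs.2⟩
    rw [h1, h2]
    exact hX s hs
  set A : ℝ := Ybar s₁ with hAdef
  have hAY : A = Y s₁ := hYbarEq s₁ hs₁
  have hA : 0 < A := by rw [hAY]; exact hYpos s₁ hs₁
  have hXs₁ : X s₁ = c * A := by rw [hAY]; exact heq
  have hs₁0 : (0:ℝ) ≤ s₁ := hs₁.1
  have hX0 : X 0 = 0 := by
    rw [hX 0 h0t, intervalIntegral.integral_same, hβ0]
    ring
  have hY0 : Y 0 = y := by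
    rw [hY 0 h0t, intervalIntegral.integral_same]
    ring
  have hs₁pos : 0 < s₁ := by
    rcases hs₁0.lt_or_eq with h | h
    · exact h
    · exfalso
      have h2 := heq
      rw [← h, hX0, hY0] at h2
      nlinarith [mul_pos hc hy]
  -- the key exact identity
  set F : ℝ → ℝ := fun s => Ybar s * IqC s - ∫ r in (0:ℝ)..s, gC r * βC r with hFdef
  have hgβcont : Continuous fun r => gC r * βC r := hgCcont.mul hβCc
  have hFD : ∀ s ∈ Icc (0:ℝ) t, HasDerivAt F 0 s := by
    intro s hs
    have h1 := (hYbarD s).mul (hIqCD s)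
    have h2 := ftc_cont hgβcont s
    have h3 : HasDerivAt F (gC s * IqC s + Ybar s * qC s - gC s * βC s) s := h1.sub h2
    convert h3 using 1
    have hXe := hXeq s hs
    have hYe := hYbarEq s hs
    have hq : qC s = 2 * X s / (X s ^ 2 + Y s ^ 2) := hqCeq s hs
    have hg : gC s = 2 * Y s / (X s ^ 2 + Y s ^ 2) := hgCeq s hs
    have hD : 0 < X s^2 + Y s^2 := by nlinarith [hYpos s hs, sq_nonneg (X s)]
    have hβs : βC s = IqC s + X s := by rw [hXe]; ring
    rw [hYe, hq, hg, hβs]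
    ring
  have hFcont : Continuous F :=
    (hYbarC.mul hIqCc).sub (continuous_iff_continuousAt.2 fun s => (ftc_cont hgβcont s).continuousAt)
  have hF0 : F 0 = 0 := by
    rw [hFdef]
    simp [intervalIntegral.integral_same, hIqCdef]
  have hFs₁ : F s₁ = 0 := by
    have hcst := constant_of_has_deriv_right_zero
      (hFcont.continuousOn : ContinuousOn F (Icc 0 s₁))
      (fun x hx => ((hFD x ⟨hx.1, hx.2.le.trans hs₁.2⟩)).hasDerivWithinAt)
    have h := hcst s₁ (right_mem_Icc.2 hs₁0)
    rw [h, hF0]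
  have hIden : A * IqC s₁ = ∫ r in (0:ℝ)..s₁, gC r * βC r := by
    have h := hFs₁
    rw [hFdef] at h
    simp only at h
    rw [← hAdef] at h
    linarith
  have hsum : ∫ r in (0:ℝ)..s₁, gC r = A - y := by
    have : A = y + ∫ r in (0:ℝ)..s₁, gC r := by rw [hAdef, hYbardef]
    linarith
  clear_value τ XC YC βC gC qC Ybar IqC A F c b
  -- integrability
  have i1 : IntervalIntegrable (fun r => gC r * (βC s₁ - βC r)) volume 0 s₁ :=
    (hgCcont.mul (continuous_const.sub hβCc)).intervalIntegrable _ _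
  have isq : Continuous fun r : ℝ => σ * Real.sqrt (s₁ - r) :=
    continuous_const.mul (Real.continuous_sqrt.comp (continuous_const.sub continuous_id))
  have i2 : IntervalIntegrable (fun r => gC r * (σ * Real.sqrt (s₁ - r))) volume 0 s₁ :=
    (hgCcont.mul isq).intervalIntegrable _ _
  have isq2 : Continuous fun r : ℝ => σ / Real.sqrt b * Real.sqrt (A^2 - Ybar r^2) :=
    continuous_const.mul (Real.continuous_sqrt.comp (continuous_const.sub (hYbarC.pow 2)))
  have i3 : IntervalIntegrable (fun r => gC r * (σ / Real.sqrt b * Real.sqrt (A^2 - Ybar r^2)))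
      volume 0 s₁ := (hgCcont.mul isq2).intervalIntegrable _ _
  -- main decomposition
  have hmain : A * X s₁ = y * βC s₁ + ∫ r in (0:ℝ)..s₁, gC r * (βC s₁ - βC r) := by
    have e0 : (fun r => gC r * (βC s₁ - βC r)) = fun r => gC r * βC s₁ - gC r * βC r := by
      funext r; ring
    rw [e0, intervalIntegral.integral_sub (f := fun r => gC r * βC s₁) (g := fun r => gC r * βC r)
        ((hgCcont.mul continuous_const).intervalIntegrable _ _ :
          IntervalIntegrable (fun r => gC r * βC s₁) volume 0 s₁)
        (hgβcont.intervalIntegrable _ _),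
      intervalIntegral.integral_mul_const, hsum, ← hIden, hXeq s₁ hs₁]
    ring
  -- monotonicity of Ybar^2 - b s
  set φ : ℝ → ℝ := fun s => Ybar s^2 - b*s with hφdef
  have hφD : ∀ s, HasDerivAt φ (2*Ybar s*gC s - b) s := by
    intro s
    have h1 : HasDerivAt (fun u => Ybar u^2) (2*Ybar s*gC s) s := by
      simpa using (hYbarD s).fun_pow 2
    have h2 : HasDerivAt (fun u : ℝ => b*u) b s := by
      simpa using (hasDerivAt_id s).const_mul b
    exact h1.sub h2
  have hφmono : MonotoneOn φ (Icc 0 s₁) := by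
    apply monotoneOn_of_deriv_nonneg (convex_Icc 0 s₁)
    · exact ((hYbarC.pow 2).sub (continuous_const.mul continuous_id)).continuousOn
    · intro x _
      exact (hφD x).differentiableAt.differentiableWithinAt
    · intro x hx
      rw [interior_Icc] at hx
      rw [(hφD x).deriv]
      have hxt : x ∈ Icc (0:ℝ) t := ⟨hx.1.le, hx.2.le.trans hs₁.2⟩
      have hxs : x ∈ Icc (0:ℝ) s₁ := ⟨hx.1.le, hx.2.le⟩
      have hYe := hYbarEq x hxt
      have hg := hgCeq x hxt
      have hD : 0 < X x^2 + Y x^2 := by nlinarith [hYpos x hxt, sq_nonneg (X x)]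
      have hcx := hcone x hxs
      have hX2 : X x^2 ≤ c^2 * Y x^2 := by
        nlinarith [sq_abs (X x), abs_nonneg (X x), hYpos x hxt]
      have h4 : b*(X x^2 + Y x^2) ≤ 4*Y x^2 := by
        nlinarith [mul_le_mul_of_nonneg_left hX2 hb.le, key3, sq_nonneg (Y x)]
      rw [hYe, hg, show 2*Y x*(2*Y x/(X x^2+Y x^2)) = 4*Y x^2/(X x^2+Y x^2) by ring,
        sub_nonneg, le_div_iff₀ hD]
      linarith
  clear_value φ
  have hbs : ∀ r ∈ Icc (0:ℝ) s₁, b*(s₁ - r) ≤ A^2 - Ybar r^2 := by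
    intro r hr
    have h := hφmono hr (right_mem_Icc.2 hs₁0) hr.2
    rw [hφdef] at h
    simp only at h
    rw [← hAdef] at h
    linarith
  have hsq_ineq : ∀ r ∈ Icc (0:ℝ) s₁,
      σ * Real.sqrt (s₁ - r) ≤ σ / Real.sqrt b * Real.sqrt (A^2 - Ybar r^2) := by
    intro r hr
    have h1 : Real.sqrt b * Real.sqrt (s₁ - r) ≤ Real.sqrt (A^2 - Ybar r^2) := by
      rw [← Real.sqrt_mul hb.le]
      exact Real.sqrt_le_sqrt (hbs r hr)
    rw [div_mul_eq_mul_div, mul_div_assoc]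
    apply mul_le_mul_of_nonneg_left _ hσ0.le
    rw [le_div_iff₀ hsqb, mul_comm]
    exact h1
  have hbd1 : (∫ r in (0:ℝ)..s₁, gC r * (βC s₁ - βC r))
      ≤ ∫ r in (0:ℝ)..s₁, gC r * (σ * Real.sqrt (s₁ - r)) := by
    apply intervalIntegral.integral_mono_on hs₁0 i1 i2
    intro r hr
    apply mul_le_mul_of_nonneg_left _ (hgC0 r)
    have hrt : r ∈ Icc (0:ℝ) t := ⟨hr.1, hr.2.trans hs₁.2⟩
    rw [hβCeq r hrt, hβCeq s₁ hs₁]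
    calc β s₁ - β r ≤ |β s₁ - β r| := le_abs_self _
    _ ≤ σ * Real.sqrt |s₁ - r| := hβlip r hrt s₁ hs₁
    _ = σ * Real.sqrt (s₁ - r) := by rw [abs_of_nonneg (by linarith [hr.2])]
  have hbd2 : (∫ r in (0:ℝ)..s₁, gC r * (σ * Real.sqrt (s₁ - r)))
      ≤ ∫ r in (0:ℝ)..s₁, gC r * (σ / Real.sqrt b * Real.sqrt (A^2 - Ybar r^2)) := by
    apply intervalIntegral.integral_mono_on hs₁0 i2 i3
    intro r hr
    exact mul_le_mul_of_nonneg_left (hsq_ineq r hr) (hgC0 r)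
  -- the exact arcsin integral
  set H : ℝ → ℝ := fun w => (w * Real.sqrt (A^2 - w^2) + A^2 * Real.arcsin (w/A)) / 2 with hHdef
  have hHcont : Continuous H := by
    apply Continuous.div_const
    apply Continuous.add
    · exact continuous_id.mul (Real.continuous_sqrt.comp (continuous_const.sub (continuous_pow 2)))
    · exact continuous_const.mul (Real.continuous_arcsin.comp (continuous_id.div_const A))
  clear_value H
  have hival : Continuous fun r => gC r * Real.sqrt (A^2 - Ybar r^2) :=
    hgCcont.mul (Real.continuous_sqrt.comp (continuous_const.sub (hYbarC.pow 2)))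
  have hJ : (∫ r in (0:ℝ)..s₁, gC r * Real.sqrt (A^2 - Ybar r^2)) = H A - H y := by
    set Ψ : ℝ → ℝ := fun s => H (Ybar s) - ∫ r in (0:ℝ)..s, gC r * Real.sqrt (A^2 - Ybar r^2)
      with hΨdef
    have hΨc : ContinuousOn Ψ (Icc 0 s₁) :=
      ((hHcont.comp hYbarC).sub
        (continuous_iff_continuousAt.2 fun s => (ftc_cont hival s).continuousAt)).continuousOn
    have hder : ∀ x ∈ Ico (0:ℝ) s₁, HasDerivWithinAt Ψ 0 (Ici x) x := by
      intro x hx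
      have hxs : x ∈ Icc (0:ℝ) s₁ := ⟨hx.1, hx.2.le⟩
      have hxt : x ∈ Icc (0:ℝ) t := ⟨hx.1, hx.2.le.trans hs₁.2⟩
      have hYx : 0 < Ybar x := by rw [hYbarEq x hxt]; exact hYpos x hxt
      have hlt : Ybar x < A := by
        have h := hbs x hxs
        have h2 : 0 < b*(s₁ - x) := mul_pos hb (by linarith [hx.2])
        have h3 : Ybar x^2 < A^2 := by nlinarith
        exact lt_of_pow_lt_pow_left₀ 2 hA.le h3
      have h1 : HasDerivAt (fun s => H (Ybar s)) (Real.sqrt (A^2 - Ybar x^2) * gC x) x := by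
        have hH := hasDerivAt_H hA (by linarith : -A < Ybar x) hlt
        exact (hHdef ▸ hH).comp x (hYbarD x)
      have h2 := ftc_cont hival x
      have h3 := h1.sub h2
      have h4 : Real.sqrt (A^2 - Ybar x^2) * gC x - gC x * Real.sqrt (A^2 - Ybar x^2) = 0 := by
        ring
      rw [hΨdef]
      exact (h4 ▸ h3).hasDerivWithinAt
    have hconst := constant_of_has_deriv_right_zero hΨc hder s₁ (right_mem_Icc.2 hs₁0)
    rw [hΨdef] at hconst
    simp only at hconst
    rw [intervalIntegral.integral_same, hYbar0, ← hAdef] at hconst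
    linarith
  have hHA : H A = Real.pi * A^2 / 4 := by
    rw [hHdef]
    simp only
    rw [sub_self, Real.sqrt_zero, div_self hA.ne', Real.arcsin_one]
    ring
  have hyltA : y < A := by
    have h := hbs 0 (left_mem_Icc.2 hs₁0)
    rw [hYbar0, sub_zero] at h
    have h2 : y^2 < A^2 := by nlinarith [mul_pos hb hs₁pos]
    exact lt_of_pow_lt_pow_left₀ 2 hA.le h2
  have hHy_gt : y * Real.sqrt (A^2 - y^2) < A^2 * Real.arcsin (y/A) := key_strict hy hyltA
  -- assemble
  have hβb : βC s₁ ≤ σ * Real.sqrt s₁ := by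
    rw [hβCeq s₁ hs₁]
    calc β s₁ = β s₁ - β 0 := by rw [hβ0]; ring
    _ ≤ |β s₁ - β 0| := le_abs_self _
    _ ≤ σ * Real.sqrt |s₁ - 0| := hβlip 0 h0t s₁ hs₁
    _ = σ * Real.sqrt s₁ := by rw [sub_zero, abs_of_nonneg hs₁0]
  have hfirst : y * βC s₁ ≤ σ / Real.sqrt b * (y * Real.sqrt (A^2 - y^2)) := by
    have h2 : σ * Real.sqrt s₁ ≤ σ / Real.sqrt b * Real.sqrt (A^2 - y^2) := by
      have h := hsq_ineq 0 (left_mem_Icc.2 hs₁0)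
      rwa [sub_zero, hYbar0] at h
    calc y * βC s₁ ≤ y * (σ * Real.sqrt s₁) := mul_le_mul_of_nonneg_left hβb hy.le
    _ ≤ y * (σ / Real.sqrt b * Real.sqrt (A^2 - y^2)) := mul_le_mul_of_nonneg_left h2 hy.le
    _ = σ / Real.sqrt b * (y * Real.sqrt (A^2 - y^2)) := by ring
  have hintpull : (∫ r in (0:ℝ)..s₁, gC r * (σ / Real.sqrt b * Real.sqrt (A^2 - Ybar r^2)))
      = σ / Real.sqrt b * (H A - H y) := by
    rw [← hJ, ← intervalIntegral.integral_const_mul]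
    congr 1
    funext r
    ring
  have htotal : c * A^2 ≤ σ / Real.sqrt b * (y * Real.sqrt (A^2 - y^2) + (H A - H y)) := by
    have h0 : c * A^2 = A * X s₁ := by rw [hXs₁]; ring
    calc c * A^2 = y * βC s₁ + ∫ r in (0:ℝ)..s₁, gC r * (βC s₁ - βC r) := by rw [h0, hmain]
    _ ≤ y * βC s₁ + ∫ r in (0:ℝ)..s₁, gC r * (σ * Real.sqrt (s₁ - r)) := by linarith
    _ ≤ y * βC s₁ + ∫ r in (0:ℝ)..s₁, gC r * (σ / Real.sqrt b * Real.sqrt (A^2 - Ybar r^2)) := by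
        linarith
    _ = y * βC s₁ + σ / Real.sqrt b * (H A - H y) := by rw [hintpull]
    _ ≤ σ / Real.sqrt b * (y * Real.sqrt (A^2 - y^2)) + σ / Real.sqrt b * (H A - H y) := by
        linarith
    _ = σ / Real.sqrt b * (y * Real.sqrt (A^2 - y^2) + (H A - H y)) := by ring
  have hstrict : y * Real.sqrt (A^2 - y^2) + (H A - H y) < Real.pi * A^2 / 4 := by
    rw [hHA]
    have hH_y : H y = (y * Real.sqrt (A^2 - y^2) + A^2 * Real.arcsin (y/A)) / 2 := by rw [hHdef]
    rw [hH_y]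
    linarith
  have hfinal : σ / Real.sqrt b * (Real.pi * A^2 / 4) = c * A^2 := by
    have h1 : σ / Real.sqrt b * (Real.pi * A^2 / 4) = (Real.pi * σ / 4) * A^2 / Real.sqrt b := by
      ring
    rw [h1, ← key1]
    field_simp
  have hlast : c * A^2 < c * A^2 := by
    calc c * A^2 ≤ σ / Real.sqrt b * (y * Real.sqrt (A^2 - y^2) + (H A - H y)) := htotal
    _ < σ / Real.sqrt b * (Real.pi * A^2 / 4) :=
        mul_lt_mul_of_pos_left hstrict (div_pos hσ0 hsqb)
    _ = c * A^2 := hfinal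
  exact absurd hlast (lt_irrefl _)

/-- Cone bound for the reverse Loewner flow in the range `0 < σ < 8/π`:
`|X(s)| ≤ (πσ/√(64 − π²σ²))·Y(s)`. -/
theorem reverse_flow_cone_bound_small_sigma
    (σ t : ℝ) (hσ0 : 0 < σ) (ht : 0 < t)
    (β : ℝ → ℝ) (hβcont : ContinuousOn β (Icc 0 t)) (hβ0 : β 0 = 0)
    (hβlip : ∀ r ∈ Icc (0 : ℝ) t, ∀ s ∈ Icc (0 : ℝ) t, |β s - β r| ≤ σ * Real.sqrt |s - r|)
    (y : ℝ) (hy : 0 < y)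
    (X Y : ℝ → ℝ)
    (hXcont : ContinuousOn X (Icc 0 t)) (hYcont : ContinuousOn Y (Icc 0 t))
    (hYpos : ∀ s ∈ Icc (0 : ℝ) t, 0 < Y s)
    (hX : ∀ s ∈ Icc (0 : ℝ) t,
      X s = β s - ∫ r in (0 : ℝ)..s, 2 * X r / (X r ^ 2 + Y r ^ 2))
    (hY : ∀ s ∈ Icc (0 : ℝ) t,
      Y s = y + ∫ r in (0 : ℝ)..s, 2 * Y r / (X r ^ 2 + Y r ^ 2))
    (hσ : σ < 8 / Real.pi) :
    ∀ s ∈ Icc (0 : ℝ) t,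
      |X s| ≤ Real.pi * σ / Real.sqrt (64 - Real.pi ^ 2 * σ ^ 2) * Y s := by
  by_contra hcon
  push_neg at hcon
  obtain ⟨s₂, hs₂, hlt⟩ := hcon
  set c := Real.pi * σ / Real.sqrt (64 - Real.pi ^ 2 * σ ^ 2) with hcdef
  have hπ := Real.pi_pos
  have hE : (0:ℝ) < 64 - Real.pi^2*σ^2 := by
    have h8 : σ * Real.pi < 8 := by
      have := (lt_div_iff₀ hπ).1 hσ
      linarith
    nlinarith [mul_pos hσ0 hπ]
  have hc : 0 < c := div_pos (mul_pos hπ hσ0) (Real.sqrt_pos.2 hE)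
  have h0t : (0:ℝ) ∈ Icc (0:ℝ) t := ⟨le_refl 0, ht.le⟩
  have hX0 : X 0 = 0 := by
    rw [hX 0 h0t, intervalIntegral.integral_same, hβ0]; ring
  have hY0 : Y 0 = y := by
    rw [hY 0 h0t, intervalIntegral.integral_same]; ring
  set f : ℝ → ℝ := fun s => |X s| - c * Y s with hfdef
  have hfcont : ContinuousOn f (Icc 0 t) := hXcont.abs.sub (continuousOn_const.mul hYcont)
  have hsub : Icc (0:ℝ) s₂ ⊆ Icc 0 t := Icc_subset_Icc le_rfl hs₂.2
  set K := Icc (0:ℝ) s₂ ∩ f ⁻¹' (Ici 0) with hKdef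
  have hKclosed : IsClosed K :=
    (hfcont.mono hsub).preimage_isClosed_of_isClosed isClosed_Icc isClosed_Ici
  have hKne : K.Nonempty := by
    refine ⟨s₂, ⟨hs₂.1, le_rfl⟩, ?_⟩
    simp only [mem_preimage, mem_Ici, hfdef]
    linarith
  have hKbdd : BddBelow K := ⟨0, fun x hx => hx.1.1⟩
  set s₁ := sInf K with hs₁def
  have hs₁K : s₁ ∈ K := hKclosed.csInf_mem hKne hKbdd
  have hs₁mem : s₁ ∈ Icc (0:ℝ) t := hsub hs₁K.1
  have hf₁ : 0 ≤ f s₁ := hs₁K.2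
  have hs₁pos : 0 < s₁ := by
    rcases hs₁K.1.1.lt_or_eq with h | h
    · exact h
    · exfalso
      have hneg : f 0 < 0 := by
        rw [hfdef]
        simp only
        rw [hX0, hY0, abs_zero]
        nlinarith [mul_pos hc hy]
      rw [← h] at hf₁
      linarith
  have hlt_before : ∀ s, 0 ≤ s → s < s₁ → f s < 0 := by
    intro s h0 hlt1
    by_contra hge
    push_neg at hge
    have hsK : s ∈ K := ⟨⟨h0, le_trans hlt1.le hs₁K.1.2⟩, hge⟩
    exact absurd (csInf_le hKbdd hsK) (not_le.2 hlt1)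
  have hfs₁le : f s₁ ≤ 0 := by
    have hcw : ContinuousWithinAt f (Ico 0 s₁) s₁ :=
      (hfcont s₁ hs₁mem).mono (by intro x hx; exact ⟨hx.1, hx.2.le.trans hs₁mem.2⟩)
    have hne : (𝓝[Ico (0:ℝ) s₁] s₁).NeBot := by
      rw [← mem_closure_iff_nhdsWithin_neBot, closure_Ico hs₁pos.ne]
      exact ⟨hs₁K.1.1, le_rfl⟩
    exact le_of_tendsto hcw (eventually_nhdsWithin_of_forall fun s hs =>
      (hlt_before s hs.1 hs.2).le)
  have habs : |X s₁| = c * Y s₁ := by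
    have h := le_antisymm hfs₁le hf₁
    rw [hfdef] at h
    simp only at h
    linarith
  have hcone : ∀ r ∈ Icc (0:ℝ) s₁, |X r| ≤ c * Y r := by
    intro r hr
    rcases hr.2.lt_or_eq with h | h
    · have h2 := hlt_before r hr.1 h
      rw [hfdef] at h2
      simp only at h2
      linarith
    · rw [h, habs]
  rcases (abs_eq (mul_nonneg hc.le (hYpos s₁ hs₁mem).le)).1 habs with h | h
  · exact auxA σ t hσ0 ht β hβcont hβ0 hβlip y hy X Y hXcont hYcont hYpos hX hY hσ
      s₁ hs₁mem hcone h
  · have hlip' : ∀ r ∈ Icc (0:ℝ) t, ∀ s ∈ Icc (0:ℝ) t,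
        |(-β s) - (-β r)| ≤ σ * Real.sqrt |s - r| := by
      intro r hr s hs
      have h2 := hβlip r hr s hs
      rw [show -β s - -β r = -(β s - β r) by ring, abs_neg]
      exact h2
    have hX' : ∀ s ∈ Icc (0:ℝ) t,
        (-X s) = (-β s) - ∫ r in (0:ℝ)..s, 2 * (-X r) / ((-X r)^2 + Y r^2) := by
      intro s hs
      have e : (fun r => 2 * (-X r) / ((-X r)^2 + Y r^2))
          = fun r => -(2 * X r / (X r^2 + Y r^2)) := by
        funext r
        rw [neg_sq]
        ring
      rw [e, intervalIntegral.integral_neg]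
      have h3 := hX s hs
      linarith
    have hY' : ∀ s ∈ Icc (0:ℝ) t,
        Y s = y + ∫ r in (0:ℝ)..s, 2 * Y r / ((-X r)^2 + Y r^2) := by
      intro s hs
      have e : (fun r => 2 * Y r / ((-X r)^2 + Y r^2))
          = fun r => 2 * Y r / (X r^2 + Y r^2) := by
        funext r
        rw [neg_sq]
      rw [e]
      exact hY s hs
    have hcone' : ∀ r ∈ Icc (0:ℝ) s₁, |(-X r)| ≤ c * Y r := by
      intro r hr
      rw [abs_neg]
      exact hcone r hr
    have heq' : -X s₁ = c * Y s₁ := by linarith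
    exact auxA σ t hσ0 ht (fun s => -β s) hβcont.neg (by simp [hβ0]) hlip' y hy
      (fun s => -X s) Y hXcont.neg hYcont hYpos hX' hY' hσ s₁ hs₁mem hcone' heq'
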